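/- arXiv:2412.04899 — 3 statements merged into one kernel-verified Lean document; each statement's English description precedes it below -/
import Mathlib

section
/- Let f, h : U → ℝ^{d−n} be C¹ maps on an open convex set U ⊆ ℝⁿ, and ψ : U → [0,1] a C¹ function. Assume: Df is L_{Df}-Lipschitz; Dh is L_{Df}-Lipschitz; ψ and Dψ are both Lipschitz with constant at most L; ‖Dψ(y)‖ ≤ L for all y; sup_y |h(y) − f(y)| ≤ ε; and sup_y ‖Dh(y) − Df(y)‖_op ≤ ε. Then the derivative of F(x) = (1−ψ(x)) f(x) + ψ(x) h(x) is Lipschitz with constant 3Lε + L_{Df}: for all y₁, y₂, ‖DF(y₂) − DF(y₁)‖_op ≤ (3Lε + L_{Df}) |y₂ − y₁|. -/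
set_option maxHeartbeats 1000000 in
/-- The derivative of the interpolation `F = (1-ψ) f + ψ h` is Lipschitz with
constant `3 L ε + L_{Df}`. -/
theorem interpolation_derivative_lipschitz (n d : ℕ) (LDf L ε : ℝ)
    (U : Set (EuclideanSpace ℝ (Fin n))) (hU : IsOpen U) (hUconv : Convex ℝ U)
    (f h : EuclideanSpace ℝ (Fin n) → EuclideanSpace ℝ (Fin (d - n)))
    (ψ : EuclideanSpace ℝ (Fin n) → ℝ)
    (hf : ContDiffOn ℝ 1 f U) (hh : ContDiffOn ℝ 1 h U) (hψC1 : ContDiffOn ℝ 1 ψ U)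
    (hψ01 : ∀ x ∈ U, ψ x ∈ Set.Icc (0 : ℝ) 1)
    (hDf_lip : ∀ y₁ ∈ U, ∀ y₂ ∈ U,
      ‖fderivWithin ℝ f U y₂ - fderivWithin ℝ f U y₁‖ ≤ LDf * ‖y₂ - y₁‖)
    (hDh_lip : ∀ y₁ ∈ U, ∀ y₂ ∈ U,
      ‖fderivWithin ℝ h U y₂ - fderivWithin ℝ h U y₁‖ ≤ LDf * ‖y₂ - y₁‖)
    (hψ_lip : ∀ y₁ ∈ U, ∀ y₂ ∈ U, |ψ y₂ - ψ y₁| ≤ L * ‖y₂ - y₁‖)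
    (hDψ_lip : ∀ y₁ ∈ U, ∀ y₂ ∈ U,
      ‖fderivWithin ℝ ψ U y₂ - fderivWithin ℝ ψ U y₁‖ ≤ L * ‖y₂ - y₁‖)
    (hDψ_bound : ∀ y ∈ U, ‖fderivWithin ℝ ψ U y‖ ≤ L)
    (hclose : ∀ y ∈ U, ‖h y - f y‖ ≤ ε)
    (hDclose : ∀ y ∈ U, ‖fderivWithin ℝ h U y - fderivWithin ℝ f U y‖ ≤ ε)
    (F : EuclideanSpace ℝ (Fin n) → EuclideanSpace ℝ (Fin (d - n)))
    (hF : ∀ x ∈ U, F x = (1 - ψ x) • f x + ψ x • h x) :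
    ∀ y₁ ∈ U, ∀ y₂ ∈ U,
      ‖fderivWithin ℝ F U y₂ - fderivWithin ℝ F U y₁‖ ≤ (3 * L * ε + LDf) * ‖y₂ - y₁‖ := by

  intro y₁ hy₁ y₂ hy₂
  have hL : 0 ≤ L := le_trans (norm_nonneg _) (hDψ_bound y₁ hy₁)
  have hε : 0 ≤ ε := le_trans (norm_nonneg _) (hclose y₁ hy₁)
  have hfd : DifferentiableOn ℝ f U := hf.differentiableOn one_ne_zero
  have hhd : DifferentiableOn ℝ h U := hh.differentiableOn one_ne_zero
  have hψd : DifferentiableOn ℝ ψ U := hψC1.differentiableOn one_ne_zero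
  set A := fun y => fderivWithin ℝ f U y with hA
  set B := fun y => fderivWithin ℝ h U y with hB
  set P := fun y => fderivWithin ℝ ψ U y with hP
  by_cases hne : y₂ = y₁
  · subst hne
    simp
  have hΔ : 0 < ‖y₂ - y₁‖ := norm_pos_iff.mpr (sub_ne_zero.mpr hne)
  have hLDf : 0 ≤ LDf := by
    have h0 : (0:ℝ) ≤ LDf * ‖y₂ - y₁‖ :=
      le_trans (norm_nonneg _) (hDf_lip y₁ hy₁ y₂ hy₂)
    nlinarith
  -- derivative formula
  have key : ∀ y ∈ U, fderivWithin ℝ F U y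
      = (1 - ψ y) • A y + ψ y • B y + (P y).smulRight (h y - f y) := by
    intro y hy
    have hf' := (hfd y hy).hasFDerivWithinAt
    have hh' := (hhd y hy).hasFDerivWithinAt
    have hψ' := (hψd y hy).hasFDerivWithinAt
    have h1 : HasFDerivWithinAt (fun x => (1 - ψ x) • f x)
        ((1 - ψ y) • A y + ((0 : _) - P y).smulRight (f y)) U y :=
      ((hasFDerivWithinAt_const (1:ℝ) y U).sub hψ').smul hf'
    have h2 : HasFDerivWithinAt (fun x => ψ x • h x)
        (ψ y • B y + (P y).smulRight (h y)) U y := hψ'.smul hh'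
    have h3 : HasFDerivWithinAt F
        (((1 - ψ y) • A y + ((0 : _) - P y).smulRight (f y))
          + (ψ y • B y + (P y).smulRight (h y))) U y :=
      (h1.add h2).congr (fun x hx => hF x hx) (hF y hy)
    rw [h3.fderivWithin (hU.uniqueDiffOn y hy)]
    refine ContinuousLinearMap.ext fun x => ?_
    simp only [ContinuousLinearMap.add_apply, ContinuousLinearMap.smul_apply,
      ContinuousLinearMap.smulRight_apply, ContinuousLinearMap.sub_apply,
      ContinuousLinearMap.zero_apply]
    module
  -- Lipschitz bound on h - f via mean value inequality
  have hg_lip : ‖(h y₂ - f y₂) - (h y₁ - f y₁)‖ ≤ ε * ‖y₂ - y₁‖ := by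
    have hd : DifferentiableOn ℝ (fun x => h x - f x) U := hhd.sub hfd
    have hbd : ∀ x ∈ U, ‖fderivWithin ℝ (fun x => h x - f x) U x‖ ≤ ε := by
      intro x hx
      rw [fderivWithin_fun_sub (hU.uniqueDiffOn x hx) (hhd x hx) (hfd x hx)]
      exact hDclose x hx
    exact hUconv.norm_image_sub_le_of_norm_fderivWithin_le hd hbd hy₁ hy₂
  have decomp : fderivWithin ℝ F U y₂ - fderivWithin ℝ F U y₁
      = (1 - ψ y₂) • (A y₂ - A y₁) + ψ y₂ • (B y₂ - B y₁)
        + (ψ y₂ - ψ y₁) • (B y₁ - A y₁)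
        + (P y₂ - P y₁).smulRight (h y₂ - f y₂)
        + (P y₁).smulRight ((h y₂ - f y₂) - (h y₁ - f y₁)) := by
    rw [key y₂ hy₂, key y₁ hy₁]
    refine ContinuousLinearMap.ext fun x => ?_
    simp only [ContinuousLinearMap.add_apply, ContinuousLinearMap.smul_apply,
      ContinuousLinearMap.smulRight_apply, ContinuousLinearMap.sub_apply]
    module
  have hψ2 := hψ01 y₂ hy₂
  have e1 : ‖(1 - ψ y₂)‖ = 1 - ψ y₂ := by
    rw [Real.norm_eq_abs, abs_of_nonneg]; linarith [hψ2.2]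
  have e2 : ‖ψ y₂‖ = ψ y₂ := by
    rw [Real.norm_eq_abs, abs_of_nonneg hψ2.1]
  have t1 : ‖(1 - ψ y₂) • (A y₂ - A y₁)‖ ≤ (1 - ψ y₂) * (LDf * ‖y₂ - y₁‖) :=
    le_trans (ContinuousLinearMap.opNorm_smul_le _ _) (by
      rw [e1]
      exact mul_le_mul_of_nonneg_left (hDf_lip y₁ hy₁ y₂ hy₂) (by linarith [hψ2.2]))
  have t2 : ‖ψ y₂ • (B y₂ - B y₁)‖ ≤ ψ y₂ * (LDf * ‖y₂ - y₁‖) :=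
    le_trans (ContinuousLinearMap.opNorm_smul_le _ _) (by
      rw [e2]
      exact mul_le_mul_of_nonneg_left (hDh_lip y₁ hy₁ y₂ hy₂) hψ2.1)
  have t3 : ‖(ψ y₂ - ψ y₁) • (B y₁ - A y₁)‖ ≤ (L * ‖y₂ - y₁‖) * ε :=
    le_trans (ContinuousLinearMap.opNorm_smul_le _ _) (by
      rw [Real.norm_eq_abs]
      exact mul_le_mul (hψ_lip y₁ hy₁ y₂ hy₂) (hDclose y₁ hy₁) (norm_nonneg _)
        (by positivity))
  have t4 : ‖(P y₂ - P y₁).smulRight (h y₂ - f y₂)‖ ≤ (L * ‖y₂ - y₁‖) * ε := by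
    rw [ContinuousLinearMap.norm_smulRight_apply]
    exact mul_le_mul (hDψ_lip y₁ hy₁ y₂ hy₂) (hclose y₂ hy₂) (norm_nonneg _)
      (by positivity)
  have t5 : ‖(P y₁).smulRight ((h y₂ - f y₂) - (h y₁ - f y₁))‖
      ≤ L * (ε * ‖y₂ - y₁‖) := by
    rw [ContinuousLinearMap.norm_smulRight_apply]
    exact mul_le_mul (hDψ_bound y₁ hy₁) hg_lip (norm_nonneg _) hL
  rw [decomp]
  have n1 := norm_add_le ((1 - ψ y₂) • (A y₂ - A y₁) + ψ y₂ • (B y₂ - B y₁)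
        + (ψ y₂ - ψ y₁) • (B y₁ - A y₁) + (P y₂ - P y₁).smulRight (h y₂ - f y₂))
      ((P y₁).smulRight ((h y₂ - f y₂) - (h y₁ - f y₁)))
  have n2 := norm_add_le ((1 - ψ y₂) • (A y₂ - A y₁) + ψ y₂ • (B y₂ - B y₁)
        + (ψ y₂ - ψ y₁) • (B y₁ - A y₁)) ((P y₂ - P y₁).smulRight (h y₂ - f y₂))
  have n3 := norm_add_le ((1 - ψ y₂) • (A y₂ - A y₁) + ψ y₂ • (B y₂ - B y₁))
      ((ψ y₂ - ψ y₁) • (B y₁ - A y₁))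
  have n4 := norm_add_le ((1 - ψ y₂) • (A y₂ - A y₁)) (ψ y₂ • (B y₂ - B y₁))
  nlinarith [hΔ, hL, hε, hLDf]
end

section
/- Let F : U → ℝ^{d−n} be a C¹ map on an open convex set U ⊆ ℝⁿ whose derivative DF is L-Lipschitz. For y₁, y₂ ∈ U let p₁' = (y₁, F(y₁)) and p₂' = (y₂, F(y₂)) be points of the graph of F, and let Tan_{p₁'} be the affine tangent space of the graph at p₁', i.e. p₁' + {(v, DF(y₁)v) : v ∈ ℝⁿ}. Then the distance from p₂' to Tan_{p₁'} is at most (L/2)|p₂' − p₁'|². -/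
open Metric

open Set in
lemma taylor_quad {E F : Type*} [NormedAddCommGroup E] [NormedSpace ℝ E]
    [NormedAddCommGroup F] [NormedSpace ℝ F] {s : Set E} (hs : Convex ℝ s)
    {f : E → F} {f' : E → E →L[ℝ] F}
    (hf : ∀ x ∈ s, HasFDerivWithinAt f (f' x) s x) {L : ℝ}
    (hlip : ∀ x ∈ s, ∀ y ∈ s, ‖f' y - f' x‖ ≤ L * ‖y - x‖)
    {x y : E} (hx : x ∈ s) (hy : y ∈ s) :
    ‖f y - f x - f' x (y - x)‖ ≤ L / 2 * ‖y - x‖ ^ 2 := by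
  set h : ℝ → E := fun t => x + t • (y - x) with hh
  have hmem : ∀ t ∈ Icc (0:ℝ) 1, h t ∈ s := fun t ht => by
    have h0 := hs.lineMap_mem hx hy ht
    rw [AffineMap.lineMap_apply_module] at h0
    have : h t = (1 - t) • x + t • y := by simp only [hh, smul_sub, sub_smul, one_smul]; abel
    rw [this]; exact h0
  have hmaps : MapsTo h (Icc (0:ℝ) 1) s := hmem
  have hline : ∀ t : ℝ, HasDerivAt h (y - x) t := fun t => by
    exact (((hasDerivAt_id t).smul_const (y - x)).const_add x).congr_deriv (one_smul _ _)
  set g : ℝ → F := fun t => f (h t) - f x - t • (f' x (y - x)) with hg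
  have hgderiv : ∀ t ∈ Ico (0:ℝ) 1,
      HasDerivWithinAt g ((f' (h t) - f' x) (y - x)) (Ici t) t := by
    intro t ht
    have h1 : HasDerivWithinAt (fun t => f (h t)) (f' (h t) (y - x)) (Icc (0:ℝ) 1) t :=
      (hf (h t) (hmem t (Ico_subset_Icc_self ht))).comp_hasDerivWithinAt t
        ((hline t).hasDerivWithinAt) hmaps
    have h2 : HasDerivWithinAt g (f' (h t) (y - x) - f' x (y - x)) (Icc (0:ℝ) 1) t := by
      exact ((h1.sub_const (f x)).sub
        (((hasDerivAt_id t).smul_const (f' x (y - x))).hasDerivWithinAt)).congr_deriv (by rw [one_smul])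
    exact (h2.mono_of_mem_nhdsWithin (Icc_mem_nhdsGE_of_mem ht)).congr_deriv (by simp)
  set B : ℝ → ℝ := fun t => L * ‖y - x‖ ^ 2 / 2 * t ^ 2 with hB
  have hBderiv : ∀ t : ℝ, HasDerivAt B (L * ‖y - x‖ ^ 2 * t) t := fun t => by
    have := (hasDerivAt_pow 2 t).const_mul (L * ‖y - x‖ ^ 2 / 2)
    exact this.congr_deriv (by rw [show (2:ℕ) - 1 = 1 from rfl]; push_cast; ring)
  have bound : ∀ t ∈ Ico (0:ℝ) 1, ‖(f' (h t) - f' x) (y - x)‖ ≤ L * ‖y - x‖ ^ 2 * t := by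
    intro t ht
    calc ‖(f' (h t) - f' x) (y - x)‖ ≤ ‖f' (h t) - f' x‖ * ‖y - x‖ :=
          (f' (h t) - f' x).le_opNorm _
      _ ≤ (L * ‖h t - x‖) * ‖y - x‖ :=
          mul_le_mul_of_nonneg_right (hlip x hx (h t) (hmem t (Ico_subset_Icc_self ht)))
            (norm_nonneg _)
      _ = L * ‖y - x‖ ^ 2 * t := by
          have : h t - x = t • (y - x) := by simp [hh]
          rw [this, norm_smul, Real.norm_eq_abs, abs_of_nonneg ht.1]; ring
  have hgcont : ContinuousOn g (Icc (0:ℝ) 1) := by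
    apply ContinuousOn.sub
    · apply ContinuousOn.sub _ continuousOn_const
      exact fun t ht => ((hf (h t) (hmem t ht)).continuousWithinAt.comp
        ((hline t).continuousAt.continuousWithinAt) hmaps)
    · exact (continuous_id.smul continuous_const).continuousOn
  have key := image_norm_le_of_norm_deriv_right_le_deriv_boundary hgcont hgderiv
    (by simp [hg, hh, hB]) hBderiv bound (right_mem_Icc.2 zero_le_one)
  have : g 1 = f y - f x - f' x (y - x) := by simp [hg, hh]
  rw [this] at key
  calc ‖f y - f x - f' x (y - x)‖ ≤ B 1 := key
    _ = L / 2 * ‖y - x‖ ^ 2 := by simp [hB]; ring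


/-- Distance from a graph point to the affine tangent space of the graph at another point,
for a `C¹` map with `L`-Lipschitz derivative. -/
theorem dist_graph_point_to_affine_tangent (n d : ℕ) (L : ℝ)
    (U : Set (EuclideanSpace ℝ (Fin n))) (hU : IsOpen U) (hUconv : Convex ℝ U)
    (F : EuclideanSpace ℝ (Fin n) → EuclideanSpace ℝ (Fin (d - n)))
    (hF : ContDiffOn ℝ 1 F U)
    (hDF_lip : ∀ y₁ ∈ U, ∀ y₂ ∈ U,
      ‖fderivWithin ℝ F U y₂ - fderivWithin ℝ F U y₁‖ ≤ L * ‖y₂ - y₁‖)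
    (y₁ : EuclideanSpace ℝ (Fin n)) (hy₁ : y₁ ∈ U)
    (y₂ : EuclideanSpace ℝ (Fin n)) (hy₂ : y₂ ∈ U) :
    letI P := WithLp 2 (EuclideanSpace ℝ (Fin n) × EuclideanSpace ℝ (Fin (d - n)))
    let e := (WithLp.equiv 2 (EuclideanSpace ℝ (Fin n) × EuclideanSpace ℝ (Fin (d - n)))).symm
    let p₁' : P := e (y₁, F y₁)
    let p₂' : P := e (y₂, F y₂)
    let Tan : Set P := {z | ∃ v : EuclideanSpace ℝ (Fin n),
      z = p₁' + e (v, fderivWithin ℝ F U y₁ v)}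
    infDist p₂' Tan ≤ L / 2 * ‖p₂' - p₁'‖ ^ 2 := by
  intro e p₁' p₂' Tan
  set f' := fderivWithin ℝ F U with hf'
  -- the candidate point
  set z : WithLp 2 (EuclideanSpace ℝ (Fin n) × EuclideanSpace ℝ (Fin (d - n))) := p₁' + e (y₂ - y₁, f' y₁ (y₂ - y₁)) with hz
  have hzTan : z ∈ Tan := ⟨y₂ - y₁, rfl⟩
  have hdiff : p₂' - z = e (0, F y₂ - F y₁ - f' y₁ (y₂ - y₁)) := by
    rw [hz]
    apply (WithLp.equiv 2 _).injective
    ext <;> simp [e, p₁', p₂'] <;> abel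
  have hnorm : ‖p₂' - z‖ = ‖F y₂ - F y₁ - f' y₁ (y₂ - y₁)‖ := by
    rw [hdiff, WithLp.prod_norm_eq_of_L2]
    show √(‖(0 : EuclideanSpace ℝ (Fin n))‖ ^ 2 + ‖F y₂ - F y₁ - f' y₁ (y₂ - y₁)‖ ^ 2) = _
    simp [Real.sqrt_sq (norm_nonneg _)]
  rcases eq_or_ne y₂ y₁ with rfl | hne
  · -- p₂' = p₁' ∈ Tan
    have hmem : p₂' ∈ Tan := ⟨0, by simp [e, p₁', p₂']⟩
    have h0 : infDist p₂' Tan = 0 := infDist_zero_of_mem hmem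
    rw [h0]
    have : p₂' - p₁' = 0 := sub_self _
    rw [this]
    simp
  · have hL : 0 ≤ L := by
      have h1 := hDF_lip y₁ hy₁ y₂ hy₂
      have h2 : (0:ℝ) < ‖y₂ - y₁‖ := by
        rw [norm_pos_iff, sub_ne_zero]; exact hne
      nlinarith [norm_nonneg (f' y₂ - f' y₁)]
    have hderiv : ∀ x ∈ U, HasFDerivWithinAt F (f' x) U x := fun x hx =>
      (hF.differentiableOn one_ne_zero x hx).hasFDerivWithinAt
    have htaylor := taylor_quad hUconv hderiv hDF_lip hy₁ hy₂
    have hle : ‖y₂ - y₁‖ ≤ ‖p₂' - p₁'‖ := by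
      have hdiff2 : p₂' - p₁' = e (y₂ - y₁, F y₂ - F y₁) := by
        apply (WithLp.equiv 2 _).injective
        ext <;> simp [e, p₁', p₂']
      rw [hdiff2, WithLp.prod_norm_eq_of_L2]
      show ‖y₂ - y₁‖ ≤ √(‖y₂ - y₁‖ ^ 2 + ‖F y₂ - F y₁‖ ^ 2)
      rw [show ‖y₂ - y₁‖ = √(‖y₂ - y₁‖ ^ 2) by
        rw [Real.sqrt_sq (norm_nonneg _)]]
      apply Real.sqrt_le_sqrt
      nlinarith [norm_nonneg (F y₂ - F y₁), Real.sq_sqrt (sq_nonneg ‖y₂ - y₁‖)]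
    calc infDist p₂' Tan ≤ dist p₂' z := infDist_le_dist_of_mem hzTan
      _ = ‖p₂' - z‖ := dist_eq_norm _ _
      _ = ‖F y₂ - F y₁ - f' y₁ (y₂ - y₁)‖ := hnorm
      _ ≤ L / 2 * ‖y₂ - y₁‖ ^ 2 := htaylor
      _ ≤ L / 2 * ‖p₂' - p₁'‖ ^ 2 := by
          apply mul_le_mul_of_nonneg_left _ (by linarith)
          exact pow_le_pow_left₀ (norm_nonneg _) hle 2
end

section
/- Let g, g̃ : ℝⁿ → ℝ^{d−n} be differentiable maps and y ∈ ℝⁿ a point with ‖Dg(y) − Dg̃(y)‖_op ≤ δ for some δ < 1. Let T = {(v, Dg(y)v) : v ∈ ℝⁿ} and T̃ = {(v, Dg̃(y)v) : v ∈ ℝⁿ} be the tangent spaces of the respective graphs at y. Then for every nonzero u ∈ T there exists a nonzero w ∈ T̃ such that the angle between u and w is at most arcsin δ. -/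
set_option maxHeartbeats 1000000

open InnerProductGeometry

/-- Tangent spaces of graphs of maps with `δ`-close derivatives at a point make an angle
at most `arcsin δ`. -/
theorem angle_tangent_spaces_of_close_derivatives (n d : ℕ) (δ : ℝ) (hδ : δ < 1)
    (g g' : EuclideanSpace ℝ (Fin n) → EuclideanSpace ℝ (Fin (d - n)))
    (hg : Differentiable ℝ g) (hg' : Differentiable ℝ g')
    (y : EuclideanSpace ℝ (Fin n))
    (hclose : ‖fderiv ℝ g y - fderiv ℝ g' y‖ ≤ δ) :
    let e := (WithLp.equiv 2 (EuclideanSpace ℝ (Fin n) × EuclideanSpace ℝ (Fin (d - n)))).symm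
    let T : Set (WithLp 2 (EuclideanSpace ℝ (Fin n) × EuclideanSpace ℝ (Fin (d - n)))) :=
      {z | ∃ v : EuclideanSpace ℝ (Fin n), z = e (v, fderiv ℝ g y v)}
    let T' : Set (WithLp 2 (EuclideanSpace ℝ (Fin n) × EuclideanSpace ℝ (Fin (d - n)))) :=
      {z | ∃ v : EuclideanSpace ℝ (Fin n), z = e (v, fderiv ℝ g' y v)}
    ∀ u ∈ T, u ≠ 0 → ∃ w ∈ T', w ≠ 0 ∧ angle u w ≤ Real.arcsin δ := by
  intro e T T' u hu hu0
  obtain ⟨v, rfl⟩ := hu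
  set A := fderiv ℝ g y with hA
  set B := fderiv ℝ g' y with hB
  have hv : v ≠ 0 := by
    rintro rfl
    simp [e] at hu0
  have hw0 : e (v, B v) ≠ 0 := by
    intro h
    apply hv
    have h2 := congrArg (fun z => (WithLp.equiv 2 _ z).fst) h
    simpa [e] using h2
  refine ⟨e (v, B v), ⟨v, rfl⟩, hw0, ?_⟩
  have hδ0 : 0 ≤ δ := le_trans (norm_nonneg _) hclose
  have hh : ‖A v - B v‖ ≤ δ * ‖v‖ := by
    calc ‖A v - B v‖ = ‖(A - B) v‖ := by simp
    _ ≤ ‖A - B‖ * ‖v‖ := (A - B).le_opNorm v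
    _ ≤ δ * ‖v‖ := mul_le_mul_of_nonneg_right hclose (norm_nonneg v)
  set t := ‖v‖ ^ 2 with hts
  set α := ‖A v‖ ^ 2 with hαs
  set β := ‖B v‖ ^ 2 with hβs
  set s : ℝ := inner ℝ (A v) (B v) with hss
  have ht : 0 < t := pow_pos (norm_pos_iff.2 hv) 2
  have hα : (0:ℝ) ≤ α := sq_nonneg _
  have hβ : (0:ℝ) ≤ β := sq_nonneg _
  have h1 : α + β - 2 * s ≤ δ ^ 2 * t := by
    have h2 : ‖A v - B v‖ ^ 2 ≤ (δ * ‖v‖) ^ 2 := by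
      apply sq_le_sq' _ hh
      nlinarith [norm_nonneg (A v - B v)]
    rw [@norm_sub_sq_real] at h2
    rw [hαs, hβs, hss, hts]
    nlinarith [h2]
  have hP : (inner ℝ (e (v, A v)) (e (v, B v)) : ℝ) = t + s := by
    rw [WithLp.prod_inner_apply]
    simp only [e, WithLp.equiv_symm_apply, WithLp.toLp_fst, WithLp.toLp_snd]
    rw [real_inner_self_eq_norm_sq]
  have hu2 : ‖e (v, A v)‖ ^ 2 = t + α := by
    rw [WithLp.prod_norm_sq_eq_of_L2]
    simp only [e, WithLp.equiv_symm_apply, WithLp.toLp_fst, WithLp.toLp_snd]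
    rfl
  have hw2 : ‖e (v, B v)‖ ^ 2 = t + β := by
    rw [WithLp.prod_norm_sq_eq_of_L2]
    simp only [e, WithLp.equiv_symm_apply, WithLp.toLp_fst, WithLp.toLp_snd]
    rfl
  have hδ2 : δ ^ 2 < 1 := by nlinarith
  have htδ : 0 < t * (1 - δ ^ 2) := mul_pos ht (by linarith)
  have hPpos : (0:ℝ) < t + s := by nlinarith [htδ, h1, hα, hβ]
  have hkey : (1 - δ ^ 2) * ((t + α) * (t + β)) ≤ (t + s) ^ 2 := by
    nlinarith [sq_nonneg (α - s), mul_le_mul_of_nonneg_left h1 hα,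
      mul_le_mul_of_nonneg_left h1 ht.le, mul_nonneg (mul_nonneg hδ0 hδ0) (mul_nonneg ht.le hβ),
      mul_nonneg (mul_nonneg hδ0 hδ0) (mul_nonneg hα hβ), real_inner_mul_inner_self_le (A v) (B v)]
  have hnupos : 0 < ‖e (v, A v)‖ * ‖e (v, B v)‖ :=
    mul_pos (norm_pos_iff.2 hu0) (norm_pos_iff.2 hw0)
  have hcos : Real.cos (Real.arcsin δ) ≤ Real.cos (angle (e (v, A v)) (e (v, B v))) := by
    rw [Real.cos_arcsin, cos_angle, le_div_iff₀ hnupos, hP]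
    have heq : Real.sqrt (1 - δ ^ 2) * (‖e (v, A v)‖ * ‖e (v, B v)‖)
        = Real.sqrt ((1 - δ ^ 2) * ((t + α) * (t + β))) := by
      rw [← hu2, ← hw2, Real.sqrt_mul (by nlinarith : (0:ℝ) ≤ 1 - δ ^ 2),
        Real.sqrt_mul (sq_nonneg _), Real.sqrt_sq (norm_nonneg _), Real.sqrt_sq (norm_nonneg _)]
    rw [heq]
    calc Real.sqrt ((1 - δ ^ 2) * ((t + α) * (t + β))) ≤ Real.sqrt ((t + s) ^ 2) :=
          Real.sqrt_le_sqrt hkey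
      _ = t + s := Real.sqrt_sq hPpos.le
  by_contra hcon
  push_neg at hcon
  have hmono := Real.strictAntiOn_cos
    ⟨Real.arcsin_nonneg.2 hδ0, le_trans (Real.arcsin_le_pi_div_two δ) (by linarith [Real.pi_pos])⟩
    ⟨angle_nonneg _ _, angle_le_pi _ _⟩ hcon
  linarith
end
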